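/- arXiv:1905.06635 — 2 statements merged into one kernel-verified Lean document; each statement's English description precedes it below -/
import Mathlib

section
/- Value of a local optimum against its subsets (Lemma 4, first inequality): let F : Finset V → ℝ be a set function on a finite set V and let S ⊆ V be a local optimum of F. Then for every subset I ⊆ S, F(I) ≤ F(S) − C(|S \ I|, 2) · λ_F(S, 2), where C(n, 2) = n(n−1)/2 denotes the binomial coefficient. -/
open Finset

variable {V : Type*} [Fintype V] [DecidableEq V]

/-- The marginal gain `F_S(A) = F(A ∪ S) − F(A)` generalizes `F_x(A)` via `S = {x}`.
The submodularity index (SmI) of `F` for a set `L ⊆ V` and cardinality `k` is the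
minimum of `∑ x ∈ S, F_x(A) − F_S(A)` over all pairs `(S, A)` with `A ⊆ L`,
`S ∩ A = ∅`, and `|S| ≤ k`. -/
noncomputable def smI (F : Finset V → ℝ) (L : Finset V) (k : ℕ) : ℝ :=
  (Finset.univ.filter (fun p : Finset V × Finset V =>
      p.2 ⊆ L ∧ p.1 ∩ p.2 = ∅ ∧ p.1.card ≤ k)).inf'
    ⟨(∅, ∅), by simp⟩
    (fun p => (∑ x ∈ p.1, (F (p.2 ∪ {x}) - F p.2)) - (F (p.2 ∪ p.1) - F p.2))

/-- A set `S ⊆ V` is a local optimum of `F` if `F(S) ≥ F(S \ {a})` for every `a ∈ S`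
and `F(S) ≥ F(S ∪ {a})` for every `a ∉ S`. -/
def IsLocalOptimum (F : Finset V → ℝ) (S : Finset V) : Prop :=
  (∀ a ∈ S, F (S \ {a}) ≤ F S) ∧ (∀ a ∉ S, F (S ∪ {a}) ≤ F S)

lemma smI_le (F : Finset V → ℝ) (L : Finset V) (k : ℕ) (T A : Finset V)
    (hA : A ⊆ L) (hTA : T ∩ A = ∅) (hT : T.card ≤ k) :
    smI F L k ≤ (∑ x ∈ T, (F (A ∪ {x}) - F A)) - (F (A ∪ T) - F A) := by
  have hmem : ((T, A) : Finset V × Finset V) ∈ Finset.univ.filter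
      (fun p : Finset V × Finset V => p.2 ⊆ L ∧ p.1 ∩ p.2 = ∅ ∧ p.1.card ≤ k) := by
    rw [Finset.mem_filter]
    exact ⟨Finset.mem_univ _, hA, hTA, hT⟩
  exact Finset.inf'_le _ hmem

lemma marg_drop (F : Finset V → ℝ) (L A : Finset V) (x y : V)
    (hA : A ⊆ L) (hx : x ∉ A) (hy : y ∈ A) :
    smI F L 2 + (F (A ∪ {x}) - F A) ≤ F ((A \ {y}) ∪ {x}) - F (A \ {y}) := by
  have hne : x ≠ y := fun h => hx (h ▸ hy)
  have hdisj : ({x, y} : Finset V) ∩ (A \ {y}) = ∅ := by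
    rw [Finset.eq_empty_iff_forall_notMem]
    intro a ha
    simp only [Finset.mem_inter, Finset.mem_insert, Finset.mem_singleton,
      Finset.mem_sdiff] at ha
    rcases ha with ⟨h1 | rfl, h2, h3⟩
    · exact hx (h1 ▸ h2)
    · exact h3 rfl
  have h := smI_le F L 2 {x, y} (A \ {y}) (sdiff_subset.trans hA) hdisj
    ((Finset.card_insert_le x {y}).trans (by simp))
  rw [Finset.sum_pair hne] at h
  have e1 : A \ {y} ∪ {y} = A := by
    rw [Finset.sdiff_union_self_eq_union,
      Finset.union_eq_left.mpr (Finset.singleton_subset_iff.mpr hy)]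
  have e2 : A \ {y} ∪ {x, y} = A ∪ {x} := by
    rw [Finset.pair_comm, Finset.insert_eq, ← Finset.union_assoc, e1]
  rw [e1, e2] at h
  linarith

lemma marg_chain (F : Finset V → ℝ) (L : Finset V) (x : V) :
    ∀ n (A B : Finset V), B ⊆ A → A ⊆ L → x ∉ A → (A \ B).card = n →
    (n : ℝ) * smI F L 2 + (F (A ∪ {x}) - F A) ≤ F (B ∪ {x}) - F B := by
  intro n
  induction n with
  | zero =>
    intro A B hBA hAL hx hcard
    have : A = B := Finset.Subset.antisymm
      (Finset.sdiff_eq_empty_iff_subset.mp (Finset.card_eq_zero.mp hcard)) hBA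
    simp [this]
  | succ n ih =>
    intro A B hBA hAL hx hcard
    obtain ⟨y, hy⟩ : (A \ B).Nonempty := Finset.card_pos.mp (by omega)
    have hyA : y ∈ A := (Finset.mem_sdiff.mp hy).1
    have hyB : y ∉ B := (Finset.mem_sdiff.mp hy).2
    have h1 := marg_drop F L A x y hAL hx hyA
    have hcard' : ((A \ {y}) \ B).card = n := by
      have e : (A \ {y}) \ B = (A \ B) \ {y} := by
        ext a; simp; tauto
      rw [e, Finset.sdiff_singleton_eq_erase, Finset.card_erase_of_mem hy, hcard, Nat.add_sub_cancel]
    have h2 := ih (A \ {y}) B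
      (Finset.subset_sdiff.mpr ⟨hBA, by simpa using hyB⟩)
      (sdiff_subset.trans hAL) (by simp [hx]) hcard'
    push_cast
    linarith

lemma main_aux (F : Finset V → ℝ) (S : Finset V) (hS : IsLocalOptimum F S) :
    ∀ n (I : Finset V), I ⊆ S → (S \ I).card = n →
      F I ≤ F S - (n.choose 2 : ℝ) * smI F S 2 := by
  intro n
  induction n with
  | zero =>
    intro I hI hc
    have : S = I := Finset.Subset.antisymm
      (Finset.sdiff_eq_empty_iff_subset.mp (Finset.card_eq_zero.mp hc)) hI
    simp [this]
  | succ n ih =>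
    intro I hI hc
    obtain ⟨x, hx⟩ : (S \ I).Nonempty := Finset.card_pos.mp (by omega)
    have hxS : x ∈ S := (Finset.mem_sdiff.mp hx).1
    have hxI : x ∉ I := (Finset.mem_sdiff.mp hx).2
    have hIH := ih (I ∪ {x}) (Finset.union_subset hI (by simpa using hxS)) (by
      have e : S \ (I ∪ {x}) = (S \ I) \ {x} := by ext a; simp; tauto
      rw [e, Finset.sdiff_singleton_eq_erase, Finset.card_erase_of_mem hx, hc, Nat.add_sub_cancel])
    have e1 : (S \ {x}) ∪ {x} = S := by
      rw [Finset.sdiff_union_self_eq_union,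
        Finset.union_eq_left.mpr (Finset.singleton_subset_iff.mpr hxS)]
    have h0 : 0 ≤ F ((S \ {x}) ∪ {x}) - F (S \ {x}) := by
      rw [e1]; linarith [hS.1 x hxS]
    have hchain := marg_chain F S x n (S \ {x}) I
      (Finset.subset_sdiff.mpr ⟨hI, by simpa using hxI⟩)
      sdiff_subset (by simp)
      (by
        have e : (S \ {x}) \ I = (S \ I) \ {x} := by ext a; simp; tauto
        rw [e, Finset.sdiff_singleton_eq_erase, Finset.card_erase_of_mem hx, hc, Nat.add_sub_cancel])
    have hc2 : ((n+1).choose 2 : ℝ) = (n.choose 2 : ℝ) + n := by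
      rw [Nat.choose_succ_succ]
      push_cast [Nat.choose_one_right]
      ring
    have hgoal : F S - (((n+1).choose 2 : ℕ) : ℝ) * smI F S 2 =
        F S - ((n.choose 2 : ℕ) : ℝ) * smI F S 2 - (n : ℝ) * smI F S 2 := by
      rw [hc2]; ring
    linarith [hgoal]

/-- Value of a local optimum against its subsets (Lemma 4, first inequality):
if `S` is a local optimum of `F`, then for every `I ⊆ S`,
`F(I) ≤ F(S) − C(|S \ I|, 2) · λ_F(S, 2)`. -/
theorem local_optimum_subset_bound (F : Finset V → ℝ)
    (S : Finset V) (hS : IsLocalOptimum F S)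
    (I : Finset V) (hI : I ⊆ S) :
    F I ≤ F S - ((S \ I).card.choose 2 : ℝ) * smI F S 2 := by
  exact main_aux F S hS _ I hI rfl
end

section
/- One-third approximation from the local search guarantee (Corollary 1 of the paper): let F : Finset V → ℝ be a nonnegative set function on a finite set V, let C ⊆ V be a maximizer of F over all subsets of V, let S ⊆ V be a local optimum of F, and set ξ = C(|S \ C|, 2) + C(|C \ S|, 2) + |V \ (S ∪ C)| · |S| + |C \ S| · |S ∩ C|, where C(n, 2) = n(n−1)/2. If F(C) + ξ · λ_F(V, 2) ≥ 0, then F(S) ≥ (1/3)·(F(C) + ξ · λ_F(V, 2)) or F(V \ S) ≥ (1/3)·(F(C) + ξ · λ_F(V, 2)). -/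
open Finset

variable {V : Type*} [Fintype V] [DecidableEq V]

lemma smI_le_pair (F : Finset V → ℝ) (x y : V) (A : Finset V)
    (hx : x ∉ A) (hy : y ∉ A) (hxy : x ≠ y) :
    smI F Finset.univ 2 ≤
      F (insert x A) + F (insert y A) - F A - F (insert x (insert y A)) := by
  have hmem : (({x, y}, A) : Finset V × Finset V) ∈
      Finset.univ.filter (fun p : Finset V × Finset V =>
        p.2 ⊆ Finset.univ ∧ p.1 ∩ p.2 = ∅ ∧ p.1.card ≤ 2) := by
    simp only [mem_filter, mem_univ, true_and]
    refine ⟨subset_univ _, ?_, ?_⟩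
    · ext a
      simp only [mem_inter, mem_insert, mem_singleton, notMem_empty, iff_false, not_and]
      rintro (rfl | rfl) ha
      · exact hx ha
      · exact hy ha
    · rw [card_insert_of_notMem (by simpa using hxy), card_singleton]
  have h := Finset.inf'_le (s := Finset.univ.filter (fun p : Finset V × Finset V =>
        p.2 ⊆ Finset.univ ∧ p.1 ∩ p.2 = ∅ ∧ p.1.card ≤ 2))
      (fun p => (∑ z ∈ p.1, (F (p.2 ∪ {z}) - F p.2)) - (F (p.2 ∪ p.1) - F p.2)) hmem
  rw [show smI F Finset.univ 2 = _ from rfl]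
  refine le_trans h (le_of_eq ?_)
  rw [Finset.sum_pair hxy]
  have e1 : A ∪ {x} = insert x A := by ext b; simp [or_comm]
  have e2 : A ∪ {y} = insert y A := by ext b; simp [or_comm]
  have e3 : A ∪ {x, y} = insert x (insert y A) := by
    ext b; simp
  rw [e1, e2, e3]; ring

lemma smI_step (F : Finset V → ℝ) (x y : V) (A : Finset V)
    (hx : x ∉ A) (hy : y ∉ A) (hxy : x ≠ y) :
    F (insert x (insert y A)) - F (insert y A) ≤
      F (insert x A) - F A - smI F Finset.univ 2 := by
  have h := smI_le_pair F x y A hx hy hxy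
  linarith

lemma smI_marg (F : Finset V → ℝ) (x : V) :
    ∀ (D A : Finset V), Disjoint D A → x ∉ A → x ∉ D →
      F (insert x (A ∪ D)) - F (A ∪ D) ≤
        F (insert x A) - F A - (D.card : ℝ) * smI F Finset.univ 2 := by
  intro D
  induction D using Finset.induction_on with
  | empty => intro A _ _ _; simp
  | @insert a D ha ih =>
    intro A hDA hxA hxD
    have haA : a ∉ A := (Finset.disjoint_insert_left.mp hDA).1
    have hDA' : Disjoint D A := (Finset.disjoint_insert_left.mp hDA).2
    have hxa : x ≠ a := fun h => hxD (h ▸ mem_insert_self a D)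
    have hxD' : x ∉ D := fun h => hxD (mem_insert_of_mem h)
    have h1 := smI_step F x a (A ∪ D) (by simp [hxA, hxD']) (by simp [haA, ha]) hxa
    have h2 := ih A hDA' hxA hxD'
    rw [union_insert, card_insert_of_notMem ha]
    push_cast
    linarith

lemma localA (F : Finset V → ℝ) (S : Finset V) (hS : IsLocalOptimum F S) :
    ∀ (n : ℕ) (I : Finset V), I ⊆ S → (S \ I).card = n →
      F I ≤ F S - ((n.choose 2 : ℕ) : ℝ) * smI F Finset.univ 2 := by
  intro n
  induction n with
  | zero =>
    intro I hIS hcard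
    have : I = S := Finset.Subset.antisymm hIS
      (by rwa [← sdiff_eq_empty_iff_subset, ← Finset.card_eq_zero])
    simp [this]
  | succ n ih =>
    intro I hIS hcard
    have hne : (S \ I).Nonempty := Finset.card_pos.mp (by omega)
    obtain ⟨a, ha⟩ := hne
    have haS : a ∈ S := (mem_sdiff.mp ha).1
    have haI : a ∉ I := (mem_sdiff.mp ha).2
    have hI' : insert a I ⊆ S := Finset.insert_subset haS hIS
    have hcard' : (S \ insert a I).card = n := by
      have : S \ insert a I = (S \ I).erase a := by
        ext b; simp only [mem_sdiff, mem_insert, mem_erase, not_or]; tauto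
      rw [this, Finset.card_erase_of_mem ha, hcard]; omega
    have hIH := ih (insert a I) hI' hcard'
    set D : Finset V := S.erase a \ I with hD
    have hIsub : I ⊆ S.erase a := fun b hb =>
      Finset.mem_erase.mpr ⟨fun h => haI (h ▸ hb), hIS hb⟩
    have hunion : I ∪ D = S.erase a := Finset.union_sdiff_of_subset hIsub
    have hDcard : D.card = n := by
      have : D = (S \ I).erase a := by
        ext b; simp only [hD, mem_sdiff, mem_erase]; tauto
      rw [this, Finset.card_erase_of_mem ha, hcard]; omega
    have haD : a ∉ D := fun h => (Finset.mem_erase.mp (Finset.mem_sdiff.mp h).1).1 rfl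
    have hm := smI_marg F a D I Finset.sdiff_disjoint haI haD
    rw [hunion, Finset.insert_erase haS, hDcard] at hm
    have hloc : F (S \ {a}) ≤ F S := hS.1 a haS
    rw [← Finset.erase_eq] at hloc
    have hch : ((n + 1).choose 2 : ℕ) = n.choose 2 + n := by
      rw [Nat.choose_succ_succ n 1, Nat.choose_one_right]; exact Nat.add_comm _ _
    rw [hch]
    push_cast
    linarith

lemma localB (F : Finset V → ℝ) (S : Finset V) (hS : IsLocalOptimum F S) :
    ∀ (n : ℕ) (J : Finset V), S ⊆ J → (J \ S).card = n →
      F J ≤ F S - ((n.choose 2 : ℕ) : ℝ) * smI F Finset.univ 2 := by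
  intro n
  induction n with
  | zero =>
    intro J hSJ hcard
    have : J = S := Finset.Subset.antisymm
      (by
        have : J \ S = ∅ := Finset.card_eq_zero.mp hcard
        intro b hb
        by_contra hbS
        exact absurd (Finset.mem_sdiff.mpr ⟨hb, hbS⟩) (by simp [this])) hSJ
    simp [this]
  | succ n ih =>
    intro J hSJ hcard
    have hne : (J \ S).Nonempty := Finset.card_pos.mp (by omega)
    obtain ⟨a, ha⟩ := hne
    have haJ : a ∈ J := (mem_sdiff.mp ha).1
    have haS : a ∉ S := (mem_sdiff.mp ha).2
    have hSJ' : S ⊆ J.erase a := fun b hb =>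
      Finset.mem_erase.mpr ⟨fun h => haS (h ▸ hb), hSJ hb⟩
    have hcard' : (J.erase a \ S).card = n := by
      have : J.erase a \ S = (J \ S).erase a := by
        ext b; simp only [mem_sdiff, mem_erase]; tauto
      rw [this, Finset.card_erase_of_mem ha, hcard]; omega
    have hIH := ih (J.erase a) hSJ' hcard'
    set D : Finset V := J.erase a \ S with hD
    have hunion : S ∪ D = J.erase a := Finset.union_sdiff_of_subset hSJ'
    have haD : a ∉ D := fun h => (Finset.mem_erase.mp (Finset.mem_sdiff.mp h).1).1 rfl
    have hm := smI_marg F a D S Finset.sdiff_disjoint haS haD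
    rw [hunion, Finset.insert_erase haJ, hcard'] at hm
    have hloc : F (S ∪ {a}) ≤ F S := hS.2 a haS
    have hins : insert a S = S ∪ {a} := by ext b; simp [or_comm]
    rw [hins] at hm
    have hch : ((n + 1).choose 2 : ℕ) = n.choose 2 + n := by
      rw [Nat.choose_succ_succ n 1, Nat.choose_one_right]; exact Nat.add_comm _ _
    rw [hch]
    push_cast
    linarith

lemma smI_exchange (F : Finset V → ℝ) :
    ∀ (X M Y : Finset V), Disjoint X M → Disjoint Y M → Disjoint X Y →
      F (M ∪ X ∪ Y) + F M + (X.card : ℝ) * (Y.card : ℝ) * smI F Finset.univ 2 ≤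
        F (M ∪ X) + F (M ∪ Y) := by
  intro X
  induction X using Finset.induction_on with
  | empty =>
    intro M Y _ _ _
    simp only [Finset.union_empty, Finset.card_empty, Nat.cast_zero, zero_mul, mul_zero,
      add_zero]
    linarith
  | @insert a X ha ih =>
    intro M Y hXM hYM hXY
    have haM : a ∉ M := (Finset.disjoint_insert_left.mp hXM).1
    have hXM' : Disjoint X M := (Finset.disjoint_insert_left.mp hXM).2
    have haY : a ∉ Y := (Finset.disjoint_insert_left.mp hXY).1
    have hXY' : Disjoint X Y := (Finset.disjoint_insert_left.mp hXY).2
    have hYMX : Disjoint Y (M ∪ X) := by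
      rw [Finset.disjoint_union_right]; exact ⟨hYM, hXY'.symm⟩
    have haMX : a ∉ M ∪ X := by simp [haM, ha]
    have hm := smI_marg F a Y (M ∪ X) hYMX haMX haY
    have hIH := ih M Y hXM' hYM hXY'
    rw [union_insert, insert_union, card_insert_of_notMem ha]
    push_cast
    linarith

/-- One-third approximation from the local search guarantee (Corollary 1):
with `ξ = C(|S \ C|, 2) + C(|C \ S|, 2) + |V \ (S ∪ C)| · |S| + |C \ S| · |S ∩ C|`,
if `F(C) + ξ · λ_F(V, 2) ≥ 0`, then `F(S) ≥ (1/3)(F(C) + ξ λ_F(V, 2))` or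
`F(V \ S) ≥ (1/3)(F(C) + ξ λ_F(V, 2))`. -/
theorem local_search_one_third (F : Finset V → ℝ)
    (hF : ∀ A : Finset V, 0 ≤ F A)
    (C : Finset V) (hC : ∀ A : Finset V, F A ≤ F C)
    (S : Finset V) (hS : IsLocalOptimum F S)
    (ξ : ℝ)
    (hξ : ξ = ((S \ C).card.choose 2 : ℝ) + ((C \ S).card.choose 2 : ℝ)
        + ((Finset.univ \ (S ∪ C)).card : ℝ) * (S.card : ℝ)
        + ((C \ S).card : ℝ) * ((S ∩ C).card : ℝ))
    (hpos : 0 ≤ F C + ξ * smI F Finset.univ 2) :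
    F S ≥ (1 / 3) * (F C + ξ * smI F Finset.univ 2) ∨
      F (Finset.univ \ S) ≥ (1 / 3) * (F C + ξ * smI F Finset.univ 2) := by
  set lam := smI F Finset.univ 2 with hlam
  -- Claim A : F(S ∩ C) ≤ F S - C(|S\C|,2) lam
  have h1 : F (S ∩ C) ≤ F S - (((S \ C).card.choose 2 : ℕ) : ℝ) * lam := by
    have e : S \ (S ∩ C) = S \ C := by
      ext b; simp only [mem_sdiff, mem_inter, not_and]; tauto
    exact localA F S hS ((S \ C).card) (S ∩ C) inter_subset_left (by rw [e])
  -- Claim B : F(S ∪ C) ≤ F S - C(|C\S|,2) lam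
  have h2 : F (S ∪ C) ≤ F S - (((C \ S).card.choose 2 : ℕ) : ℝ) * lam := by
    have e : (S ∪ C) \ S = C \ S := by
      ext b; simp only [mem_sdiff, mem_union]; tauto
    exact localB F S hS ((C \ S).card) (S ∪ C) subset_union_left (by rw [e])
  -- exchange 1 : M = C \ S, X = S, Y = univ \ (S ∪ C)
  have h3 : F Finset.univ + F (C \ S) +
      (S.card : ℝ) * (((Finset.univ \ (S ∪ C)).card : ℕ) : ℝ) * lam ≤
      F (S ∪ C) + F (Finset.univ \ S) := by
    have d1 : Disjoint S (C \ S) := by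
      rw [Finset.disjoint_left]; intro b hb hb'; exact (mem_sdiff.mp hb').2 hb
    have d2 : Disjoint (Finset.univ \ (S ∪ C)) (C \ S) := by
      rw [Finset.disjoint_left]; intro b hb hb'
      exact (mem_sdiff.mp hb).2 (mem_union_right _ (mem_sdiff.mp hb').1)
    have d3 : Disjoint S (Finset.univ \ (S ∪ C)) := by
      rw [Finset.disjoint_left]; intro b hb hb'
      exact (mem_sdiff.mp hb').2 (mem_union_left _ hb)
    have hx := smI_exchange F S (C \ S) (Finset.univ \ (S ∪ C)) d1 d2 d3
    have e1 : C \ S ∪ S = S ∪ C := by ext b; simp; tauto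
    have e2 : C \ S ∪ S ∪ (Finset.univ \ (S ∪ C)) = Finset.univ := by
      ext b; simp; tauto
    have e3 : C \ S ∪ (Finset.univ \ (S ∪ C)) = Finset.univ \ S := by
      ext b; simp; tauto
    rw [e2, e1, e3] at hx
    linarith
  -- exchange 2 : M = ∅, X = S ∩ C, Y = C \ S
  have h4 : F C + F (∅ : Finset V) +
      ((S ∩ C).card : ℝ) * ((C \ S).card : ℝ) * lam ≤ F (S ∩ C) + F (C \ S) := by
    have d1 : Disjoint (S ∩ C) (∅ : Finset V) := Finset.disjoint_empty_right _
    have d2 : Disjoint (C \ S) (∅ : Finset V) := Finset.disjoint_empty_right _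
    have d3 : Disjoint (S ∩ C) (C \ S) := by
      rw [Finset.disjoint_left]; intro b hb hb'
      exact (mem_sdiff.mp hb').2 (mem_inter.mp hb).1
    have hx := smI_exchange F (S ∩ C) ∅ (C \ S) d1 d2 d3
    have e : (∅ : Finset V) ∪ (S ∩ C) ∪ (C \ S) = C := by ext b; simp; tauto
    rw [e, Finset.empty_union, Finset.empty_union] at hx
    linarith
  have hxi : ξ * lam = (((S \ C).card.choose 2 : ℕ) : ℝ) * lam
      + (((C \ S).card.choose 2 : ℕ) : ℝ) * lam
      + (S.card : ℝ) * (((Finset.univ \ (S ∪ C)).card : ℕ) : ℝ) * lam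
      + ((S ∩ C).card : ℝ) * ((C \ S).card : ℝ) * lam := by
    rw [hξ]; ring
  have key : F C + ξ * lam ≤ 2 * F S + F (Finset.univ \ S) := by
    have h0 := hF (∅ : Finset V)
    have hu := hF Finset.univ
    rw [hxi]
    linarith
  by_contra h
  push_neg at h
  obtain ⟨ha, hb⟩ := h
  linarith
end
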